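/- If a connected graph G satisfies λ_2(D(G)) ≤ (17-√329)/2, then G has diameter at most 3. -/

import Mathlib

noncomputable def sortedEigenvalues {ι : Type*} [Fintype ι] [DecidableEq ι]
    (A : Matrix ι ι ℝ) (hA : A.IsHermitian) : List ℝ :=
  (Finset.univ.val.map hA.eigenvalues).sort (· ≤ ·)

/-- `eig A hA k` is the `k`-th largest eigenvalue of `A` (1-indexed). -/
noncomputable def eig {ι : Type*} [Fintype ι] [DecidableEq ι]
    (A : Matrix ι ι ℝ) (hA : A.IsHermitian) (k : ℕ) : ℝ :=
  (sortedEigenvalues A hA)[Fintype.card ι - k]!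

lemma le_eig_two {ι : Type*} [Fintype ι] [DecidableEq ι]
    (A : Matrix ι ι ℝ) (hA : A.IsHermitian) (c : ℝ)
    (hcard : 2 ≤ Fintype.card ι)
    (h2 : 2 ≤ (Finset.univ.filter fun i => c ≤ hA.eigenvalues i).card) :
    c ≤ eig A hA 2 := by
  set l : List ℝ := sortedEigenvalues A hA with hl
  set N := Fintype.card ι with hN
  have hlen : l.length = N := by
    rw [hl, sortedEigenvalues, Multiset.length_sort, Multiset.card_map]
    simp [hN]
  have hsort : l.Pairwise (· ≤ ·) := Multiset.pairwise_sort _ _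
  have hcount : 2 ≤ l.countP (fun t => decide (c ≤ t)) := by
    have h1 : Multiset.countP (fun t => c ≤ t) (Finset.univ.val.map hA.eigenvalues)
        = l.countP (fun t => decide (c ≤ t)) := by
      conv_lhs => rw [← Multiset.sort_eq (r := (· ≤ ·)) (s := Finset.univ.val.map hA.eigenvalues)]
      rw [Multiset.coe_countP, hl]; rfl
    have h3 : Multiset.countP (fun t => c ≤ t) (Finset.univ.val.map hA.eigenvalues)
        = (Finset.univ.filter fun i => c ≤ hA.eigenvalues i).card := by
      rw [Multiset.countP_map]
      rfl
    omega
  have hidx : N - 2 < l.length := by omega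
  have heig : eig A hA 2 = l[N-2] := by
    rw [eig, ← hl, ← hN, getElem!_pos l (N-2) hidx]
  rw [heig]
  by_contra hcon
  push_neg at hcon
  -- every element of l.take (N-1) is < c
  have htake : (l.take (N-1)).countP (fun t => decide (c ≤ t)) = 0 := by
    rw [List.countP_eq_zero]
    intro t ht
    obtain ⟨i, hi, rfl⟩ := List.mem_iff_getElem.mp ht
    have hilen : i < N - 1 := by
      have : (l.take (N-1)).length = min (N-1) l.length := List.length_take
      omega
    rw [List.getElem_take]
    have hle : l[i] ≤ l[N-2] := by
      rcases Nat.lt_or_ge i (N-2) with h | h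
      · exact (List.pairwise_iff_getElem.mp hsort) i (N-2) (by omega) hidx h
      · have : i = N - 2 := by omega
        subst this; exact le_refl _
    simpa using not_le.mpr (lt_of_le_of_lt hle hcon)
  have hsplit : l.countP (fun t => decide (c ≤ t))
      = (l.take (N-1)).countP (fun t => decide (c ≤ t))
        + (l.drop (N-1)).countP (fun t => decide (c ≤ t)) := by
    rw [← List.countP_append, List.take_append_drop]
  have hdrop : (l.drop (N-1)).countP (fun t => decide (c ≤ t)) ≤ 1 := by
    calc (l.drop (N-1)).countP (fun t => decide (c ≤ t)) ≤ (l.drop (N-1)).length :=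
          List.countP_le_length
      _ = 1 := by rw [List.length_drop]; omega
  omega

open Matrix

lemma two_eigs_ge {ι : Type*} [Fintype ι] [DecidableEq ι]
    (A : Matrix ι ι ℝ) (hA : A.IsHermitian) (c : ℝ) (x y : ι → ℝ)
    (hxy : ∀ a b : ℝ, a • x + b • y = 0 → a = 0 ∧ b = 0)
    (hq : ∀ a b : ℝ, c * ((a • x + b • y) ⬝ᵥ (a • x + b • y))
      ≤ (a • x + b • y) ⬝ᵥ (A *ᵥ (a • x + b • y))) :
    2 ≤ (Finset.univ.filter fun i => c ≤ hA.eigenvalues i).card := by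
  by_contra hcard
  push_neg at hcard
  have hne : Nonempty ι := by
    by_contra h
    have hx0 : (1:ℝ) • x + (0:ℝ) • y = 0 := by
      funext i; exact absurd ⟨i⟩ h
    exact one_ne_zero (hxy 1 0 hx0).1
  set U : Matrix ι ι ℝ := (hA.eigenvectorUnitary : Matrix ι ι ℝ) with hUdef
  have hUunit : U ∈ Matrix.unitaryGroup ι ℝ := hA.eigenvectorUnitary.2
  have hUtU : Uᵀ * U = 1 := by
    have := hUunit.1
    simpa [star_eq_conjTranspose] using this
  have hUUt : U * Uᵀ = 1 := by
    have := hUunit.2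
    simpa [star_eq_conjTranspose] using this
  have hspec : A = U * Matrix.diagonal hA.eigenvalues * Uᵀ := by
    have := hA.spectral_theorem
    simpa [hUdef, Matrix.star_eq_conjTranspose, Matrix.conjTranspose_eq_transpose_of_trivial] using this
  -- coordinates in eigenbasis
  set T : (ι → ℝ) → (ι → ℝ) := fun z => Uᵀ *ᵥ z with hT
  have hrecover : ∀ z : ι → ℝ, U *ᵥ T z = z := by
    intro z
    simp [hT, Matrix.mulVec_mulVec, hUUt]
  have hvU : ∀ w : ι → ℝ, w ᵥ* U = Uᵀ *ᵥ w := by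
    intro w
    rw [← Matrix.transpose_transpose U, Matrix.vecMul_transpose, Matrix.transpose_transpose]
  have hform : ∀ z : ι → ℝ, z ⬝ᵥ (A *ᵥ z) = ∑ i, hA.eigenvalues i * (T z i)^2 := by
    intro z
    have : z ⬝ᵥ (A *ᵥ z)
        = (Uᵀ *ᵥ z) ⬝ᵥ (Matrix.diagonal hA.eigenvalues *ᵥ (Uᵀ *ᵥ z)) := by
      conv_lhs => rw [hspec]
      rw [← Matrix.mulVec_mulVec, ← Matrix.mulVec_mulVec, Matrix.dotProduct_mulVec, hvU]
    rw [this, dotProduct]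
    refine Finset.sum_congr rfl fun i _ => ?_
    simp [Matrix.mulVec_diagonal, hT]
    ring
  have hnorm : ∀ z : ι → ℝ, z ⬝ᵥ z = ∑ i, (T z i)^2 := by
    intro z
    have : z ⬝ᵥ z = (Uᵀ *ᵥ z) ⬝ᵥ (Uᵀ *ᵥ z) := by
      conv_lhs => rw [← hrecover z]
      rw [Matrix.dotProduct_mulVec, hvU, hT, Matrix.mulVec_mulVec, hUtU, Matrix.one_mulVec]
    rw [this, dotProduct]
    refine Finset.sum_congr rfl fun i _ => ?_
    simp [hT, sq]
  -- the at-most-one index with eigenvalue ≥ c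
  obtain ⟨i0, hi0⟩ : ∃ i0, (Finset.univ.filter fun i => c ≤ hA.eigenvalues i) ⊆ {i0} := by
    have h1 : (Finset.univ.filter fun i => c ≤ hA.eigenvalues i).card ≤ 1 := by omega
    exact Finset.card_le_one_iff_subset_singleton.mp h1
  have hlt : ∀ i, i ≠ i0 → hA.eigenvalues i < c := by
    intro i hi
    by_contra h
    push_neg at h
    have : i ∈ ({i0} : Finset ι) := hi0 (by simp [h])
    simp at this
    exact hi this
  -- choose a, b
  obtain ⟨a, b, hab, hz0⟩ : ∃ a b : ℝ, ¬(a = 0 ∧ b = 0) ∧ T (a • x + b • y) i0 = 0 := by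
    have hlin : ∀ a b : ℝ, T (a • x + b • y) i0 = a * T x i0 + b * T y i0 := by
      intro a b
      simp [hT, Matrix.mulVec_add, Matrix.mulVec_smul]
    by_cases hx0 : T x i0 = 0
    · exact ⟨1, 0, by simp, by simp [hlin, hx0]⟩
    · refine ⟨T y i0, -T x i0, ?_, by rw [hlin]; ring⟩
      rintro ⟨-, h2⟩
      exact hx0 (by simpa using h2)
  set z := a • x + b • y with hzdef
  have hzne : z ≠ 0 := fun h => hab (hxy a b h)
  have hTzne : T z ≠ 0 := by
    intro h
    apply hzne
    rw [← hrecover z, h]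
    simp
  obtain ⟨j, hj⟩ : ∃ j, T z j ≠ 0 := by
    by_contra h
    push_neg at h
    exact hTzne (funext h)
  have hji0 : j ≠ i0 := fun h => hj (h ▸ hz0)
  have hsum : ∑ i, hA.eigenvalues i * (T z i)^2 < ∑ i, c * (T z i)^2 := by
    apply Finset.sum_lt_sum
    · intro i _
      rcases eq_or_ne i i0 with h | h
      · rw [h, hz0]; simp
      · exact mul_le_mul_of_nonneg_right (hlt i h).le (sq_nonneg _)
    · exact ⟨j, Finset.mem_univ j, by
        have h1 := hlt j hji0
        have h2 : 0 < (T z j)^2 := by positivity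
        nlinarith⟩
  have hq2 := hq a b
  rw [← hzdef, hform, hnorm] at hq2
  rw [← Finset.mul_sum] at hsum
  linarith

-- graph distance along a geodesic
lemma chain_dist_le {n : ℕ} (G : SimpleGraph (Fin n)) (hG : G.Connected)
    {u v : Fin n} (w : G.Walk u v) :
    ∀ m i : ℕ, i + m ≤ w.length → G.dist (w.getVert i) (w.getVert (i + m)) ≤ m := by
  intro m
  induction m with
  | zero => intro i _; simp [SimpleGraph.dist_self]
  | succ m ih =>
    intro i h
    have hadj : G.Adj (w.getVert (i + m)) (w.getVert (i + m + 1)) :=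
      w.adj_getVert_succ (by omega)
    have h1 : G.dist (w.getVert (i + m)) (w.getVert (i + m + 1)) ≤ 1 := by
      have := SimpleGraph.dist_le (SimpleGraph.Walk.cons hadj SimpleGraph.Walk.nil)
      simpa using this
    have h2 := ih i (by omega)
    have h3 := hG.dist_triangle (u := w.getVert i) (v := w.getVert (i + m))
      (w := w.getVert (i + m + 1))
    have : i + (m + 1) = i + m + 1 := by omega
    rw [this]
    omega

lemma geodesic_dist {n : ℕ} (G : SimpleGraph (Fin n)) (hG : G.Connected)
    {u v : Fin n} (w : G.Walk u v) (hw : w.length = G.dist u v) :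
    ∀ i j : ℕ, i ≤ j → j ≤ w.length → G.dist (w.getVert i) (w.getVert j) = j - i := by
  intro i j hij hj
  have hle : G.dist (w.getVert i) (w.getVert j) ≤ j - i := by
    have := chain_dist_le G hG w (j - i) i (by omega)
    rwa [show i + (j - i) = j by omega] at this
  have h1 : G.dist u (w.getVert i) ≤ i := by
    have := chain_dist_le G hG w i 0 (by omega)
    simpa using this
  have h2 : G.dist (w.getVert j) v ≤ w.length - j := by
    have := chain_dist_le G hG w (w.length - j) j (by omega)
    rwa [show j + (w.length - j) = w.length by omega, w.getVert_length] at this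
  have h3 : G.dist u v ≤ G.dist u (w.getVert i) + G.dist (w.getVert i) (w.getVert j)
      + G.dist (w.getVert j) v := by
    have t1 := hG.dist_triangle (u := u) (v := w.getVert i) (w := w.getVert j)
    have t2 := hG.dist_triangle (u := u) (v := w.getVert j) (w := v)
    omega
  omega


lemma quad_core (a b s0 s1 s2 s3 s4 : ℝ)
    (h0 : s0 = a * 53 + b * -26) (h1 : s1 = a * 39 + b * 79)
    (h2 : s2 = a * 35 + b * -100) (h3 : s3 = a * 39 + b * 79)
    (h4 : s4 = a * 53 + b * -26) :
    (-14/25 : ℝ) * (s0*s0 + s1*s1 + s2*s2 + s3*s3 + s4*s4) ≤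
      s0*(s0*0 + s1*1 + s2*2 + s3*3 + s4*4)
      + s1*(s0*1 + s1*0 + s2*1 + s3*2 + s4*3)
      + s2*(s0*2 + s1*1 + s2*0 + s3*1 + s4*2)
      + s3*(s0*3 + s1*2 + s2*1 + s3*0 + s4*1)
      + s4*(s0*4 + s1*3 + s2*2 + s3*1 + s4*0) := by
  subst h0 h1 h2 h3 h4
  nlinarith [sq_nonneg (2186590*a - 11966*b), sq_nonneg b, sq_nonneg a]

set_option maxHeartbeats 1600000 in
theorem small_second_eigenvalue_implies_diameter_le_three {n : ℕ}
    (G : SimpleGraph (Fin n)) (hG : G.Connected)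
    (hD : (Matrix.of fun i j => (G.dist i j : ℝ)).IsHermitian)
    (hlam : eig _ hD 2 ≤ (17 - Real.sqrt 329) / 2) :
    ∀ u v : Fin n, G.dist u v ≤ 3 := by
  intro u v
  by_contra hcon
  push_neg at hcon
  have h4 : 4 ≤ G.dist u v := hcon
  obtain ⟨w, hw⟩ := (hG.preconnected u v).exists_walk_length_eq_dist
  have hL : 4 ≤ w.length := by omega
  set p : Fin 5 → Fin n := fun k => w.getVert k.val with hp
  have hnat : ∀ k l : Fin 5, k.val ≤ l.val → G.dist (p k) (p l) = l.val - k.val := by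
    intro k l h
    exact geodesic_dist G hG w hw k.val l.val h (by omega)
  have hpinj : Function.Injective p := by
    intro k l hkl
    by_contra hne
    rcases Nat.lt_or_ge k.val l.val with h | h
    · have := hnat k l (le_of_lt h)
      rw [hkl, SimpleGraph.dist_self] at this
      omega
    · have hlt : l.val < k.val := by
        rcases Nat.lt_or_ge l.val k.val with h' | h'
        · exact h'
        · exact absurd (Fin.ext (le_antisymm h' h)) hne
      have := hnat l k (le_of_lt hlt)
      rw [← hkl, SimpleGraph.dist_self] at this
      omega
  have hn5 : 5 ≤ n := by
    have := Fintype.card_le_of_injective p hpinj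
    simpa using this
  have h00 : (G.dist (p 0) (p 0) : ℝ) = 0 := by rw [hnat 0 0 (by decide)]; norm_num [show (((0:Fin 5)).val) = 0 from rfl, show (((0:Fin 5)).val) = 0 from rfl]
  have h01 : (G.dist (p 0) (p 1) : ℝ) = 1 := by rw [hnat 0 1 (by decide)]; norm_num [show (((1:Fin 5)).val) = 1 from rfl, show (((0:Fin 5)).val) = 0 from rfl]
  have h02 : (G.dist (p 0) (p 2) : ℝ) = 2 := by rw [hnat 0 2 (by decide)]; norm_num [show (((2:Fin 5)).val) = 2 from rfl, show (((0:Fin 5)).val) = 0 from rfl]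
  have h03 : (G.dist (p 0) (p 3) : ℝ) = 3 := by rw [hnat 0 3 (by decide)]; norm_num [show (((3:Fin 5)).val) = 3 from rfl, show (((0:Fin 5)).val) = 0 from rfl]
  have h04 : (G.dist (p 0) (p 4) : ℝ) = 4 := by rw [hnat 0 4 (by decide)]; norm_num [show (((4:Fin 5)).val) = 4 from rfl, show (((0:Fin 5)).val) = 0 from rfl]
  have h10 : (G.dist (p 1) (p 0) : ℝ) = 1 := by rw [SimpleGraph.dist_comm]; rw [hnat 0 1 (by decide)]; norm_num [show (((1:Fin 5)).val) = 1 from rfl, show (((0:Fin 5)).val) = 0 from rfl]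
  have h11 : (G.dist (p 1) (p 1) : ℝ) = 0 := by rw [hnat 1 1 (by decide)]; norm_num [show (((1:Fin 5)).val) = 1 from rfl, show (((1:Fin 5)).val) = 1 from rfl]
  have h12 : (G.dist (p 1) (p 2) : ℝ) = 1 := by rw [hnat 1 2 (by decide)]; norm_num [show (((2:Fin 5)).val) = 2 from rfl, show (((1:Fin 5)).val) = 1 from rfl]
  have h13 : (G.dist (p 1) (p 3) : ℝ) = 2 := by rw [hnat 1 3 (by decide)]; norm_num [show (((3:Fin 5)).val) = 3 from rfl, show (((1:Fin 5)).val) = 1 from rfl]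
  have h14 : (G.dist (p 1) (p 4) : ℝ) = 3 := by rw [hnat 1 4 (by decide)]; norm_num [show (((4:Fin 5)).val) = 4 from rfl, show (((1:Fin 5)).val) = 1 from rfl]
  have h20 : (G.dist (p 2) (p 0) : ℝ) = 2 := by rw [SimpleGraph.dist_comm]; rw [hnat 0 2 (by decide)]; norm_num [show (((2:Fin 5)).val) = 2 from rfl, show (((0:Fin 5)).val) = 0 from rfl]
  have h21 : (G.dist (p 2) (p 1) : ℝ) = 1 := by rw [SimpleGraph.dist_comm]; rw [hnat 1 2 (by decide)]; norm_num [show (((2:Fin 5)).val) = 2 from rfl, show (((1:Fin 5)).val) = 1 from rfl]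
  have h22 : (G.dist (p 2) (p 2) : ℝ) = 0 := by rw [hnat 2 2 (by decide)]; norm_num [show (((2:Fin 5)).val) = 2 from rfl, show (((2:Fin 5)).val) = 2 from rfl]
  have h23 : (G.dist (p 2) (p 3) : ℝ) = 1 := by rw [hnat 2 3 (by decide)]; norm_num [show (((3:Fin 5)).val) = 3 from rfl, show (((2:Fin 5)).val) = 2 from rfl]
  have h24 : (G.dist (p 2) (p 4) : ℝ) = 2 := by rw [hnat 2 4 (by decide)]; norm_num [show (((4:Fin 5)).val) = 4 from rfl, show (((2:Fin 5)).val) = 2 from rfl]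
  have h30 : (G.dist (p 3) (p 0) : ℝ) = 3 := by rw [SimpleGraph.dist_comm]; rw [hnat 0 3 (by decide)]; norm_num [show (((3:Fin 5)).val) = 3 from rfl, show (((0:Fin 5)).val) = 0 from rfl]
  have h31 : (G.dist (p 3) (p 1) : ℝ) = 2 := by rw [SimpleGraph.dist_comm]; rw [hnat 1 3 (by decide)]; norm_num [show (((3:Fin 5)).val) = 3 from rfl, show (((1:Fin 5)).val) = 1 from rfl]
  have h32 : (G.dist (p 3) (p 2) : ℝ) = 1 := by rw [SimpleGraph.dist_comm]; rw [hnat 2 3 (by decide)]; norm_num [show (((3:Fin 5)).val) = 3 from rfl, show (((2:Fin 5)).val) = 2 from rfl]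
  have h33 : (G.dist (p 3) (p 3) : ℝ) = 0 := by rw [hnat 3 3 (by decide)]; norm_num [show (((3:Fin 5)).val) = 3 from rfl, show (((3:Fin 5)).val) = 3 from rfl]
  have h34 : (G.dist (p 3) (p 4) : ℝ) = 1 := by rw [hnat 3 4 (by decide)]; norm_num [show (((4:Fin 5)).val) = 4 from rfl, show (((3:Fin 5)).val) = 3 from rfl]
  have h40 : (G.dist (p 4) (p 0) : ℝ) = 4 := by rw [SimpleGraph.dist_comm]; rw [hnat 0 4 (by decide)]; norm_num [show (((4:Fin 5)).val) = 4 from rfl, show (((0:Fin 5)).val) = 0 from rfl]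
  have h41 : (G.dist (p 4) (p 1) : ℝ) = 3 := by rw [SimpleGraph.dist_comm]; rw [hnat 1 4 (by decide)]; norm_num [show (((4:Fin 5)).val) = 4 from rfl, show (((1:Fin 5)).val) = 1 from rfl]
  have h42 : (G.dist (p 4) (p 2) : ℝ) = 2 := by rw [SimpleGraph.dist_comm]; rw [hnat 2 4 (by decide)]; norm_num [show (((4:Fin 5)).val) = 4 from rfl, show (((2:Fin 5)).val) = 2 from rfl]
  have h43 : (G.dist (p 4) (p 3) : ℝ) = 1 := by rw [SimpleGraph.dist_comm]; rw [hnat 3 4 (by decide)]; norm_num [show (((4:Fin 5)).val) = 4 from rfl, show (((3:Fin 5)).val) = 3 from rfl]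
  have h44 : (G.dist (p 4) (p 4) : ℝ) = 0 := by rw [hnat 4 4 (by decide)]; norm_num [show (((4:Fin 5)).val) = 4 from rfl, show (((4:Fin 5)).val) = 4 from rfl]
  set A : Matrix (Fin n) (Fin n) ℝ := Matrix.of fun i j => (G.dist i j : ℝ) with hA
  -- test vectors
  set c1 : Fin 5 → ℝ := ![53, 39, 35, 39, 53] with hc1
  set c2 : Fin 5 → ℝ := ![-26, 79, -100, 79, -26] with hc2
  set vv : (Fin 5 → ℝ) → (Fin n → ℝ) :=
    fun s i => ∑ k : Fin 5, if i = p k then s k else 0 with hvv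
  have hval : ∀ (s : Fin 5 → ℝ) (k : Fin 5), vv s (p k) = s k := by
    intro s k
    rw [hvv]
    simp only
    rw [Finset.sum_eq_single k]
    · simp
    · intro l _ hl
      rw [if_neg fun h => hl (hpinj h.symm)]
    · intro h
      exact absurd (Finset.mem_univ k) h
  have hdot : ∀ (s : Fin 5 → ℝ) (f : Fin n → ℝ), vv s ⬝ᵥ f = ∑ k : Fin 5, s k * f (p k) := by
    intro s f
    rw [dotProduct]
    have : ∀ i : Fin n, vv s i * f i = ∑ k : Fin 5, if i = p k then s k * f i else 0 := by
      intro i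
      rw [hvv]
      simp only
      rw [Finset.sum_mul]
      refine Finset.sum_congr rfl fun k _ => ?_
      split <;> simp
    rw [Finset.sum_congr rfl fun i _ => this i, Finset.sum_comm]
    refine Finset.sum_congr rfl fun k _ => ?_
    rw [Finset.sum_ite_eq' Finset.univ (p k) (fun i => s k * f i)]
    simp
  have hcomb : ∀ a b : ℝ, a • vv c1 + b • vv c2 = vv (fun k => a * c1 k + b * c2 k) := by
    intro a b
    funext i
    rw [hvv]
    simp only [Pi.add_apply, Pi.smul_apply, smul_eq_mul]
    rw [Finset.mul_sum, Finset.mul_sum, ← Finset.sum_add_distrib]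
    refine Finset.sum_congr rfl fun k _ => ?_
    split <;> simp
  -- linear independence
  have hxy : ∀ a b : ℝ, a • vv c1 + b • vv c2 = 0 → a = 0 ∧ b = 0 := by
    intro a b hab
    rw [hcomb] at hab
    have e0 : a * c1 0 + b * c2 0 = 0 := by
      have h := congrFun hab (p 0)
      rw [hval] at h
      simpa using h
    have e2 : a * c1 2 + b * c2 2 = 0 := by
      have h := congrFun hab (p 2)
      rw [hval] at h
      simpa using h
    rw [hc1, hc2] at e0 e2
    simp only [Matrix.cons_val_zero, Matrix.cons_val_two, Matrix.vecHead, Matrix.vecTail,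
      Function.comp_apply, Fin.succ_zero_eq_one, Matrix.cons_val_one] at e0 e2
    constructor <;> linarith [e0, e2]
  -- quadratic form bound
  have hq : ∀ a b : ℝ,
      (-14/25 : ℝ) * ((a • vv c1 + b • vv c2) ⬝ᵥ (a • vv c1 + b • vv c2))
        ≤ (a • vv c1 + b • vv c2) ⬝ᵥ (A *ᵥ (a • vv c1 + b • vv c2)) := by
    intro a b
    rw [hcomb]
    set s : Fin 5 → ℝ := fun k => a * c1 k + b * c2 k with hs
    have hnorm : vv s ⬝ᵥ vv s = ∑ k : Fin 5, s k * s k := by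
      rw [hdot]
      refine Finset.sum_congr rfl fun k _ => ?_
      rw [hval]
    have hform : vv s ⬝ᵥ (A *ᵥ vv s) = ∑ k : Fin 5, s k * ∑ l : Fin 5, s l * A (p k) (p l) := by
      rw [hdot]
      refine Finset.sum_congr rfl fun k _ => ?_
      congr 1
      show (A *ᵥ vv s) (p k) = _
      rw [Matrix.mulVec, dotProduct]
      have : ∀ j : Fin n, A (p k) j * vv s j = ∑ l : Fin 5, if j = p l then A (p k) j * s l else 0 := by
        intro j
        rw [hvv]
        simp only
        rw [Finset.mul_sum]
        refine Finset.sum_congr rfl fun l _ => ?_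
        split <;> simp
      rw [Finset.sum_congr rfl fun j _ => this j, Finset.sum_comm]
      refine Finset.sum_congr rfl fun l _ => ?_
      rw [Finset.sum_ite_eq' Finset.univ (p l) (fun j => A (p k) j * s l)]
      simp [mul_comm]
    rw [hnorm, hform]
    have hAe : ∀ k l : Fin 5, A (p k) (p l) = (G.dist (p k) (p l) : ℝ) := fun k l => rfl
    have hsv : ∀ k : Fin 5, s k = a * c1 k + b * c2 k := fun k => rfl
    have key := quad_core a b (s 0) (s 1) (s 2) (s 3) (s 4)
      (by rw [hsv, hc1, hc2]; norm_num) (by rw [hsv, hc1, hc2]; norm_num)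
      (by rw [hsv, hc1, hc2]; exact rfl) (by rw [hsv, hc1, hc2]; exact rfl)
      (by rw [hsv, hc1, hc2]; exact rfl)
    simp only [Fin.sum_univ_five, hAe, h00, h01, h02, h03, h04, h10, h11, h12, h13, h14, h20, h21, h22, h23, h24, h30, h31, h32, h33, h34, h40, h41, h42, h43, h44]
    linarith [key]
  have h2 := two_eigs_ge A hD (-14/25) (vv c1) (vv c2) hxy hq
  have hle := le_eig_two A hD (-14/25) (by simp; omega) h2
  have hsqrt : (453/25 : ℝ) < Real.sqrt 329 := by
    nlinarith [Real.sq_sqrt (show (0:ℝ) ≤ 329 by norm_num), Real.sqrt_nonneg 329]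
  have : eig A hD 2 ≤ (17 - Real.sqrt 329) / 2 := hlam
  linarith
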